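/- Let n be a positive integer, let s > 0, and let r₁ ≥ r₂ ≥ … ≥ rₙ > 0 and d₁ ≥ d₂ ≥ … ≥ dₙ > 0 be real numbers. Then for every permutation π of {1, …, n}: Σ_{i=1}^n d_{n+1−i} r_i² / (d_{n+1−i} r_i + s) ≤ Σ_{i=1}^n d_{π(i)} r_i² / (d_{π(i)} r_i + s) ≤ Σ_{i=1}^n d_i r_i² / (d_i r_i + s). -/

import Mathlib

set_option maxHeartbeats 1000000

lemma key_ineq (s x y p q : ℝ) (hs : 0 < s) (hy : 0 < y) (hxy : y ≤ x)
    (hq : 0 < q) (hpq : q ≤ p) :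
    x*q^2/(x*q+s) + y*p^2/(y*p+s) ≤ x*p^2/(x*p+s) + y*q^2/(y*q+s) := by
  have hx : 0 < x := lt_of_lt_of_le hy hxy
  have hp : 0 < p := lt_of_lt_of_le hq hpq
  have h1 : 0 < x*p+s := by positivity
  have h2 : 0 < y*p+s := by positivity
  have h3 : 0 < x*q+s := by positivity
  have h4 : 0 < y*q+s := by positivity
  have hid : (x*p^2/(x*p+s) + y*q^2/(y*q+s)) - (x*q^2/(x*q+s) + y*p^2/(y*p+s))
      = s^2*(x-y)*(p-q)*(p*q*(x+y)+s*(p+q)) / ((x*p+s)*(y*p+s)*(x*q+s)*(y*q+s)) := by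
    field_simp
    ring
  have hnum : 0 ≤ s^2*(x-y)*(p-q)*(p*q*(x+y)+s*(p+q)) := by
    have := sub_nonneg.2 hxy
    have := sub_nonneg.2 hpq
    positivity
  have hden : 0 < (x*p+s)*(y*p+s)*(x*q+s)*(y*q+s) := by positivity
  nlinarith [div_nonneg hnum hden.le, hid]

lemma rearr_max {n : ℕ} (F : Fin n → Fin n → ℝ)
    (hF : ∀ a b u v : Fin n, a ≤ b → u ≤ v → F a v + F b u ≤ F a u + F b v)
    (π : Equiv.Perm (Fin n)) : ∑ i, F (π i) i ≤ ∑ i, F i i := by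
  generalize hc : π.support.card = c
  induction c using Nat.strong_induction_on generalizing π with
  | _ c ih =>
    by_cases hπ : π = 1
    · subst hπ; simp
    · have hne : π.support.Nonempty :=
        Finset.nonempty_iff_ne_empty.2 (fun h => hπ (Equiv.Perm.support_eq_empty_iff.1 h))
      set i := π.support.max' hne with hi
      have hiS : i ∈ π.support := π.support.max'_mem hne
      have hπi : π i ≠ i := Equiv.Perm.mem_support.1 hiS
      have hπiS : π i ∈ π.support := Equiv.Perm.apply_mem_support.2 hiS
      have hπile : π i ≤ i := Finset.le_max' _ _ hπiS
      have hπilt : π i < i := lt_of_le_of_ne hπile hπi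
      set j := π⁻¹ i with hj
      have hπj : π j = i := π.apply_symm_apply i
      have hji : j ≠ i := by
        intro h; rw [h] at hπj; exact hπi hπj
      have hjS : j ∈ π.support := Equiv.Perm.mem_support.2 (by rw [hπj]; exact fun h => hji h.symm)
      have hjle : j ≤ i := Finset.le_max' _ _ hjS
      have hjlt : j < i := lt_of_le_of_ne hjle hji
      set τ : Equiv.Perm (Fin n) := π * Equiv.swap i j with hτ
      have hτi : τ i = i := by
        simp [hτ, Equiv.Perm.mul_apply, Equiv.swap_apply_left, hπj]
      have hτj : τ j = π i := by
        simp [hτ, Equiv.Perm.mul_apply, Equiv.swap_apply_right]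
      have hτk : ∀ k, k ≠ i → k ≠ j → τ k = π k := by
        intro k h1 h2
        simp [hτ, Equiv.Perm.mul_apply, Equiv.swap_apply_of_ne_of_ne h1 h2]
      have hsub : τ.support ⊆ π.support.erase i := by
        intro k hk
        have hk' : τ k ≠ k := Equiv.Perm.mem_support.1 hk
        have hki : k ≠ i := by intro h; rw [h, hτi] at hk'; exact hk' rfl
        refine Finset.mem_erase.2 ⟨hki, Equiv.Perm.mem_support.2 ?_⟩
        by_cases hkj : k = j
        · rw [hkj, hπj]; exact fun h => hji h.symm
        · rw [← hτk k hki hkj]; exact hk'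
      have hcard : τ.support.card < c := by
        calc τ.support.card ≤ (π.support.erase i).card := Finset.card_le_card hsub
          _ < π.support.card := Finset.card_erase_lt_of_mem hiS
          _ = c := hc
      have hτle : ∑ k, F (τ k) k ≤ ∑ k, F k k := ih _ hcard τ rfl
      have hsplit : ∀ g : Fin n → ℝ, ∑ k, g k = g i + g j + ∑ k ∈ Finset.univ \ {i, j}, g k := by
        intro g
        have h1 : ({i, j} : Finset (Fin n)) ⊆ Finset.univ := Finset.subset_univ _
        have h2 := Finset.sum_sdiff_eq_sub (f := g) h1
        have h3 : ∑ k ∈ ({i, j} : Finset (Fin n)), g k = g i + g j :=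
          Finset.sum_pair (fun h => hji h.symm)
        rw [h2, h3]; ring
      have heq : ∑ k ∈ Finset.univ \ {i, j}, F (π k) k = ∑ k ∈ Finset.univ \ {i, j}, F (τ k) k := by
        refine Finset.sum_congr rfl fun k hk => ?_
        simp only [Finset.mem_sdiff, Finset.mem_insert, Finset.mem_singleton] at hk
        rw [hτk k (fun h => hk.2 (Or.inl h)) (fun h => hk.2 (Or.inr h))]
      have hswap : F (π i) i + F (π j) j ≤ F (τ i) i + F (τ j) j := by
        rw [hτi, hτj, hπj]
        have := hF (π i) i j i hπilt.le hjlt.le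
        linarith
      calc ∑ k, F (π k) k = F (π i) i + F (π j) j + ∑ k ∈ Finset.univ \ {i, j}, F (π k) k :=
            hsplit (fun k => F (π k) k)
        _ ≤ F (τ i) i + F (τ j) j + ∑ k ∈ Finset.univ \ {i, j}, F (τ k) k := by
            rw [heq]; linarith
        _ = ∑ k, F (τ k) k := (hsplit (fun k => F (τ k) k)).symm
        _ ≤ ∑ k, F k k := hτle

/-- rearrangement principle for `f(d, r) = d r²/(d r + s)`:
for nonincreasing positive sequences `r, d` and any permutation `π`,
`Σᵢ d_{rev i} rᵢ²/(d_{rev i} rᵢ + s) ≤ Σᵢ d_{π i} rᵢ²/(d_{π i} rᵢ + s)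
  ≤ Σᵢ dᵢ rᵢ²/(dᵢ rᵢ + s)`. -/
theorem stmt16 (n : ℕ) (hn : 0 < n) (s : ℝ) (hs : 0 < s)
    (r d : Fin n → ℝ) (hr : Antitone r) (hd : Antitone d)
    (hrpos : ∀ i, 0 < r i) (hdpos : ∀ i, 0 < d i)
    (π : Equiv.Perm (Fin n)) :
    (∑ i, d i.rev * r i ^ 2 / (d i.rev * r i + s)) ≤
        (∑ i, d (π i) * r i ^ 2 / (d (π i) * r i + s)) ∧
    (∑ i, d (π i) * r i ^ 2 / (d (π i) * r i + s)) ≤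
        ∑ i, d i * r i ^ 2 / (d i * r i + s) := by
  set F : Fin n → Fin n → ℝ := fun j i => d j * r i ^ 2 / (d j * r i + s) with hFdef
  have hF : ∀ a b u v : Fin n, a ≤ b → u ≤ v → F a v + F b u ≤ F a u + F b v := by
    intro a b u v hab huv
    exact key_ineq s (d a) (d b) (r u) (r v) hs (hdpos b) (hd hab) (hrpos v) (hr huv)
  constructor
  · -- lower bound via negated/reversed F
    have hF' : ∀ a b u v : Fin n, a ≤ b → u ≤ v →
        (fun j i => -F j.rev i) a v + (fun j i => -F j.rev i) b u ≤
        (fun j i => -F j.rev i) a u + (fun j i => -F j.rev i) b v := by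
      intro a b u v hab huv
      have hrev : b.rev ≤ a.rev := Fin.rev_le_rev.2 hab
      have := hF b.rev a.rev u v hrev huv
      simp only
      linarith
    have h := rearr_max (fun j i => -F j.rev i) hF' (π.trans (Fin.revPerm))
    simp only [Equiv.trans_apply, Fin.revPerm_apply, Fin.rev_rev] at h
    have h1 : -∑ i, F (π i) i ≤ -∑ i : Fin n, F i.rev i := by
      simpa [Finset.sum_neg_distrib] using h
    linarith
  · exact rearr_max F hF π
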